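/- With a point-null prior, fixed z ≠ 0, and equal prior model probabilities, BF₀₁ = sqrt(1+n) · exp(−n z²/(2(1+n))) → ∞ as n → ∞, hence Pr(M₀|data) = BF₀₁/(1+BF₀₁) → 1 (the Jeffreys-Lindley paradox). -/

import Mathlib

open Filter

/-- Jeffreys–Lindley paradox: with `z ≠ 0` fixed,
`BF₀₁(n) = √(1+n)·exp(−n z²/(2(1+n))) → ∞`, hence
`Pr(M₀|data) = BF₀₁/(1+BF₀₁) → 1`. -/
theorem stmt_5 (z : ℝ) (hz : z ≠ 0) :
    Tendsto (fun n : ℕ => Real.sqrt (1 + n) * Real.exp (-(n * z ^ 2) / (2 * (1 + n))))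
      atTop atTop ∧
    Tendsto (fun n : ℕ =>
        (Real.sqrt (1 + n) * Real.exp (-(n * z ^ 2) / (2 * (1 + n)))) /
          (1 + Real.sqrt (1 + n) * Real.exp (-(n * z ^ 2) / (2 * (1 + n)))))
      atTop (nhds 1) := by
  have hden : Tendsto (fun n : ℕ => (1 + (n : ℝ))) atTop atTop := by
    exact tendsto_atTop_add_const_left _ 1 tendsto_natCast_atTop_atTop
  have hexp : Tendsto (fun n : ℕ => Real.exp (-(n * z ^ 2) / (2 * (1 + n)))) atTop
      (nhds (Real.exp (-(z ^ 2) / 2))) := by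
    apply Real.continuous_exp.continuousAt.tendsto.comp
    have hinv : Tendsto (fun n : ℕ => (1 + (n : ℝ))⁻¹) atTop (nhds 0) :=
      hden.inv_tendsto_atTop
    have hfrac : Tendsto (fun n : ℕ => (n : ℝ) / (1 + n)) atTop (nhds 1) := by
      have : (fun n : ℕ => (n : ℝ) / (1 + n)) = fun n : ℕ => 1 - (1 + (n : ℝ))⁻¹ := by
        funext n
        have h : (1 : ℝ) + n ≠ 0 := by positivity
        field_simp
        ring
      rw [this]
      simpa using (tendsto_const_nhds.sub hinv)
    have := hfrac.mul (tendsto_const_nhds (x := -(z ^ 2) / 2))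
    simp only [one_mul] at this
    convert this using 2 with n
    have h : (1 : ℝ) + (n:ℝ) ≠ 0 := by positivity
    rw [div_mul_div_comm]
    rw [div_eq_div_iff (by positivity) (by positivity)]
    ring
  have hsq : Tendsto Real.sqrt atTop atTop := by
    refine tendsto_atTop_atTop.2 fun b => ⟨(max b 0) ^ 2, fun a ha => ?_⟩
    calc b ≤ max b 0 := le_max_left _ _
    _ ≤ Real.sqrt a := Real.le_sqrt_of_sq_le ha
  have hsqrt : Tendsto (fun n : ℕ => Real.sqrt (1 + n)) atTop atTop := hsq.comp hden
  have hBF : Tendsto (fun n : ℕ => Real.sqrt (1 + n) * Real.exp (-(n * z ^ 2) / (2 * (1 + n))))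
      atTop atTop :=
    hsqrt.atTop_mul_pos (Real.exp_pos _) hexp
  refine ⟨hBF, ?_⟩
  have h1 : Tendsto (fun n : ℕ =>
      (1 + Real.sqrt (1 + n) * Real.exp (-(n * z ^ 2) / (2 * (1 + n))))) atTop atTop :=
    tendsto_atTop_add_const_left _ 1 hBF
  have h2 : Tendsto (fun n : ℕ =>
      (1 + Real.sqrt (1 + n) * Real.exp (-(n * z ^ 2) / (2 * (1 + n))))⁻¹) atTop (nhds 0) :=
    h1.inv_tendsto_atTop
  have key : ∀ᶠ n : ℕ in atTop,
      (Real.sqrt (1 + n) * Real.exp (-(n * z ^ 2) / (2 * (1 + n)))) /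
        (1 + Real.sqrt (1 + n) * Real.exp (-(n * z ^ 2) / (2 * (1 + n)))) =
      1 - (1 + Real.sqrt (1 + n) * Real.exp (-(n * z ^ 2) / (2 * (1 + n))))⁻¹ := by
    filter_upwards [h1.eventually_gt_atTop 0] with n hn
    field_simp
    ring
  have := tendsto_const_nhds (x := (1:ℝ)) (f := atTop (α := ℕ)) |>.sub h2
  simp only [sub_zero] at this
  exact this.congr' (key.mono fun n h => h.symm)
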